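/- Suppose m > 0. Then for every Lipschitz function u : ℝᵈ → ℝ the function y ↦ Ψ(m^{1/α}‖y‖) · min(1, ‖y‖^{−(d+α)}) · |u(y)|² belongs to L¹(ℝᵈ) with respect to Lebesgue measure. -/

import Mathlib

set_option maxHeartbeats 1000000

open MeasureTheory

/-- `I(r) = ∫₀^∞ s^{(d+α)/2 − 1} e^{−s/4 − r²/s} ds`. -/
noncomputable def Ifun (d : ℕ) (α : ℝ) (r : ℝ) : ℝ :=
  ∫ s in Set.Ioi (0 : ℝ), s ^ (((d : ℝ) + α) / 2 - 1) * Real.exp (-(s / 4) - r ^ 2 / s)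

/-- `Ψ(r) = I(r)/I(0)`. -/
noncomputable def Psi (d : ℕ) (α : ℝ) (r : ℝ) : ℝ := Ifun d α r / Ifun d α 0

section aux

variable {d : ℕ} {α : ℝ}

lemma aux_integ (ν c : ℝ) (hν : (0:ℝ) < ν) (hc : 0 < c) :
    IntegrableOn (fun s : ℝ => s ^ (ν - 1) * Real.exp (-(c * s))) (Set.Ioi 0) := by
  have := integrableOn_rpow_mul_exp_neg_mul_rpow (p := 1) (s := ν - 1) (b := c)
    (by linarith) one_pos hc
  simp_rw [Real.rpow_one, neg_mul] at this ⊢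
  exact this

lemma aux_meas (ν : ℝ) (r : ℝ) :
    Measurable (fun s : ℝ => s ^ (ν - 1) * Real.exp (-(s / 4) - r ^ 2 / s)) := by
  fun_prop

lemma aux_integrableOn (hd : 1 ≤ d) (hα : 0 < α) (r : ℝ) :
    IntegrableOn (fun s : ℝ =>
      s ^ (((d : ℝ) + α) / 2 - 1) * Real.exp (-(s / 4) - r ^ 2 / s)) (Set.Ioi 0) := by
  set ν : ℝ := ((d : ℝ) + α) / 2 with hν
  have hν0 : 0 < ν := by
    have : (1:ℝ) ≤ (d:ℝ) := by exact_mod_cast hd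
    simp only [hν]; linarith
  refine Integrable.mono' (aux_integ ν (1/4) hν0 (by norm_num))
    ((aux_meas ν r).aestronglyMeasurable.restrict) ?_
  filter_upwards [ae_restrict_mem measurableSet_Ioi] with s hs
  have hs0 : (0:ℝ) < s := hs
  have h1 : 0 ≤ s ^ (ν - 1) := Real.rpow_nonneg hs0.le _
  rw [Real.norm_eq_abs, abs_of_nonneg (by positivity)]
  have : Real.exp (-(s / 4) - r ^ 2 / s) ≤ Real.exp (-(1/4 * s)) := by
    apply Real.exp_le_exp.2
    have : 0 ≤ r ^ 2 / s := div_nonneg (sq_nonneg r) hs0.le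
    linarith
  exact mul_le_mul_of_nonneg_left this h1

lemma Ifun_nonneg (r : ℝ) : 0 ≤ Ifun d α r := by
  apply setIntegral_nonneg measurableSet_Ioi
  intro s hs
  have : (0:ℝ) < s := hs
  positivity

lemma Ifun_zero_pos (hd : 1 ≤ d) (hα : 0 < α) : 0 < Ifun d α 0 := by
  rw [Ifun, setIntegral_pos_iff_support_of_nonneg_ae]
  · refine lt_of_lt_of_le (b := volume (Set.Ioi (0:ℝ))) (by simp) (measure_mono ?_)
    intro s hs
    have hs0 : (0:ℝ) < s := hs
    constructor
    · simp only [Function.mem_support]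
      positivity
    · exact hs
  · filter_upwards [ae_restrict_mem measurableSet_Ioi] with s hs
    have : (0:ℝ) < s := hs
    positivity
  · exact aux_integrableOn hd hα 0

lemma Ifun_le_Ifun_zero (hd : 1 ≤ d) (hα : 0 < α) (r : ℝ) : Ifun d α r ≤ Ifun d α 0 := by
  apply setIntegral_mono_on (aux_integrableOn hd hα r) (aux_integrableOn hd hα 0)
    measurableSet_Ioi
  intro s hs
  have hs0 : (0:ℝ) < s := hs
  have h1 : 0 ≤ s ^ (((d : ℝ) + α) / 2 - 1) := Real.rpow_nonneg hs0.le _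
  apply mul_le_mul_of_nonneg_left _ h1
  apply Real.exp_le_exp.2
  have h2 : 0 ≤ r ^ 2 / s := div_nonneg (sq_nonneg r) hs0.le
  have h3 : (0:ℝ) ^ 2 / s = 0 := by simp
  linarith [h3.ge]

lemma Psi_nonneg (hd : 1 ≤ d) (hα : 0 < α) (r : ℝ) : 0 ≤ Psi d α r :=
  div_nonneg (Ifun_nonneg r) (Ifun_zero_pos hd hα).le

lemma Psi_le_one (hd : 1 ≤ d) (hα : 0 < α) (r : ℝ) : Psi d α r ≤ 1 :=
  (div_le_one (Ifun_zero_pos hd hα)).2 (Ifun_le_Ifun_zero hd hα r)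

/-- the exponential-decay bound: `I(r) ≤ e^{-(√2/2) r} J` with
`J = ∫ s^{ν-1} e^{-s/8}`. -/
lemma Ifun_le_exp (hd : 1 ≤ d) (hα : 0 < α) (r : ℝ) (hr : 0 ≤ r) :
    Ifun d α r ≤ Real.exp (-(Real.sqrt 2 / 2 * r)) *
      ∫ s in Set.Ioi (0:ℝ), s ^ (((d : ℝ) + α) / 2 - 1) * Real.exp (-(1/8 * s)) := by
  set ν : ℝ := ((d : ℝ) + α) / 2 with hνdef
  have hν0 : 0 < ν := by
    have : (1:ℝ) ≤ (d:ℝ) := by exact_mod_cast hd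
    simp only [hνdef]; linarith
  rw [← integral_const_mul]
  apply setIntegral_mono_on (aux_integrableOn hd hα r)
    ((aux_integ ν (1/8) hν0 (by norm_num)).const_mul _) measurableSet_Ioi
  intro s hs
  have hs0 : (0:ℝ) < s := hs
  have h1 : 0 ≤ s ^ (ν - 1) := Real.rpow_nonneg hs0.le _
  have key : Real.sqrt 2 / 2 * r ≤ s / 8 + r ^ 2 / s := by
    rw [div_add_div _ _ (by norm_num : (8:ℝ) ≠ 0) hs0.ne', le_div_iff₀ (by positivity)]
    nlinarith [sq_nonneg (s - 2 * Real.sqrt 2 * r), Real.sq_sqrt (by norm_num : (0:ℝ) ≤ 2),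
      Real.sqrt_nonneg 2, hs0]
  calc s ^ (ν - 1) * Real.exp (-(s / 4) - r ^ 2 / s)
      ≤ s ^ (ν - 1) * Real.exp (-(Real.sqrt 2 / 2 * r) + -(1/8 * s)) := by
        apply mul_le_mul_of_nonneg_left _ h1
        apply Real.exp_le_exp.2
        linarith
    _ = Real.exp (-(Real.sqrt 2 / 2 * r)) * (s ^ (ν - 1) * Real.exp (-(1/8 * s))) := by
        rw [Real.exp_add]; ring

end aux


lemma exp_neg_le_aux (t : ℝ) (ht : 0 < t) : Real.exp (-t) ≤ 4 / t ^ 2 := by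
  have h1 : t / 2 + 1 ≤ Real.exp (t / 2) := Real.add_one_le_exp _
  have h2 : Real.exp (t / 2) ^ 2 = Real.exp t := by
    rw [sq, ← Real.exp_add]; ring_nf
  have h3 : t ^ 2 / 4 ≤ Real.exp t := by nlinarith [Real.exp_pos (t / 2)]
  calc Real.exp (-t) = 1 / Real.exp t := by rw [Real.exp_neg, one_div]
    _ ≤ 1 / (t ^ 2 / 4) := one_div_le_one_div_of_le (by positivity) h3
    _ = 4 / t ^ 2 := one_div_div _ _

/-- Suppose `m > 0`.
Then for every Lipschitz `u : ℝᵈ → ℝ`, the function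
`y ↦ Ψ(m^{1/α}‖y‖) · min(1, ‖y‖^{−(d+α)}) · |u(y)|²` is in `L¹(ℝᵈ)`. -/
theorem stmt_17 (d : ℕ) (hd : 1 ≤ d) (α : ℝ) (hα : 0 < α) (hα2 : α < 2)
    (m : ℝ) (hm : 0 < m)
    (u : EuclideanSpace ℝ (Fin d) → ℝ) (K : NNReal) (hu : LipschitzWith K u) :
    Integrable (fun y : EuclideanSpace ℝ (Fin d) =>
      Psi d α (m ^ (1 / α) * ‖y‖) * min 1 (‖y‖ ^ (-((d : ℝ) + α))) * |u y| ^ 2) volume := by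
  have hd1 : (1:ℝ) ≤ (d:ℝ) := by exact_mod_cast hd
  set p : ℝ := (d : ℝ) + α with hpdef
  have hp0 : 0 < p := by simp only [hpdef]; linarith
  set M : ℝ := m ^ (1 / α) with hMdef
  have hM : 0 < M := Real.rpow_pos_of_pos hm _
  set I0 : ℝ := Ifun d α 0 with hI0def
  have hI0 : 0 < I0 := Ifun_zero_pos hd hα
  set J : ℝ := ∫ s in Set.Ioi (0:ℝ), s ^ (((d : ℝ) + α) / 2 - 1) * Real.exp (-(1/8 * s))
    with hJdef
  have hJ0 : 0 ≤ J := by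
    apply setIntegral_nonneg measurableSet_Ioi
    intro s hs
    have : (0:ℝ) < s := hs
    positivity
  set D : ℝ := J / I0 with hDdef
  have hD0 : 0 ≤ D := div_nonneg hJ0 hI0.le
  set a : ℝ := |u 0| with hadef
  have ha0 : 0 ≤ a := abs_nonneg _
  have hK0 : (0:ℝ) ≤ (K:ℝ) := K.coe_nonneg
  set C1 : ℝ := (a + K) ^ 2 with hC1def
  set C2 : ℝ := 8 * D / M ^ 2 * (a + K) ^ 2 with hC2def
  have hC1nn : 0 ≤ C1 := by positivity
  have hC2nn : 0 ≤ C2 := by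
    apply mul_nonneg _ (by positivity)
    exact div_nonneg (by linarith) (by positivity)
  have hmaxnn : 0 ≤ max C1 C2 := le_trans hC1nn (le_max_left _ _)
  set C : ℝ := max C1 C2 * 2 ^ p with hCdef
  -- integrability of the dominating function
  have hfinrank : (Module.finrank ℝ (EuclideanSpace ℝ (Fin d)) : ℝ) < p := by
    rw [finrank_euclideanSpace_fin]; simp only [hpdef]; linarith
  have hg : Integrable (fun y : EuclideanSpace ℝ (Fin d) => C * (1 + ‖y‖) ^ (-p)) volume :=
    (integrable_one_add_norm hfinrank).const_mul C
  refine hg.mono' ?_ (Filter.Eventually.of_forall fun y => ?_)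
  · -- measurability
    have hF : Measurable (Function.uncurry fun r s : ℝ =>
        s ^ (((d:ℝ) + α) / 2 - 1) * Real.exp (-(s / 4) - r ^ 2 / s)) := by fun_prop
    have hImeas : Measurable (Ifun d α) :=
      hF.stronglyMeasurable.integral_prod_right'.measurable
    apply Measurable.aestronglyMeasurable
    refine Measurable.mul (Measurable.mul ?_ ?_) ?_
    · simp only [Psi]
      exact (hImeas.comp (measurable_const.mul measurable_norm)).div_const _
    · exact measurable_const.min (measurable_norm.pow_const _)
    · exact (hu.continuous.measurable.abs).pow_const 2
  · -- the pointwise bound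
    set r : ℝ := ‖y‖ with hrdef
    have hr0 : 0 ≤ r := norm_nonneg _
    have hmn0 : 0 ≤ min 1 (r ^ (-p)) := le_min zero_le_one (Real.rpow_nonneg hr0 _)
    have hfy0 : 0 ≤ Psi d α (M * r) * min 1 (r ^ (-p)) * |u y| ^ 2 :=
      mul_nonneg (mul_nonneg (Psi_nonneg hd hα _) hmn0) (pow_nonneg (abs_nonneg _) 2)
    rw [Real.norm_eq_abs, abs_of_nonneg hfy0]
    have hub : |u y| ≤ a + K * r := by
      have h := hu.dist_le_mul y 0
      rw [dist_zero_right] at h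
      calc |u y| = |u 0 + (u y - u 0)| := by ring_nf
        _ ≤ |u 0| + |u y - u 0| := abs_add_le _ _
        _ ≤ a + K * r := by
            have : |u y - u 0| = dist (u y) (u 0) := (Real.dist_eq _ _).symm
            rw [this]; exact add_le_add le_rfl h
    rcases le_total r 1 with hy | hy
    · -- small r
      have hP := Psi_le_one hd hα (M * r)
      have hu2 : |u y| ^ 2 ≤ C1 := by
        have h1 : |u y| ≤ a + K := by nlinarith
        calc |u y| ^ 2 ≤ (a + K) ^ 2 := pow_le_pow_left₀ (abs_nonneg _) h1 2
          _ = C1 := rfl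
      have step1 : Psi d α (M * r) * min 1 (r ^ (-p)) * |u y| ^ 2 ≤ C1 := by
        have := mul_le_mul (mul_le_mul hP (min_le_left _ _) hmn0 zero_le_one) hu2
          (pow_nonneg (abs_nonneg _) 2) (by norm_num)
        simpa using this
      have hinv : (2:ℝ) ^ (-p) ≤ (1 + r) ^ (-p) := by
        rw [Real.rpow_neg (by linarith : (0:ℝ) ≤ 1 + r), Real.rpow_neg (by norm_num)]
        exact inv_anti₀ (by positivity)
          (Real.rpow_le_rpow (by linarith) (by linarith) hp0.le)
      calc Psi d α (M * r) * min 1 (r ^ (-p)) * |u y| ^ 2 ≤ C1 := step1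
        _ ≤ max C1 C2 := le_max_left _ _
        _ = C * 2 ^ (-p) := by
            rw [hCdef, mul_assoc, ← Real.rpow_add two_pos, add_neg_cancel, Real.rpow_zero,
              mul_one]
        _ ≤ C * (1 + r) ^ (-p) := by
            apply mul_le_mul_of_nonneg_left hinv
            exact mul_nonneg hmaxnn (by positivity)
    · -- large r
      have hrpos : 0 < r := lt_of_lt_of_le one_pos hy
      have hP : Psi d α (M * r) ≤ 8 * D / (M ^ 2 * r ^ 2) := by
        have h1 : Psi d α (M * r) ≤ Real.exp (-(Real.sqrt 2 / 2 * (M * r))) * D := by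
          rw [Psi, hDdef, ← hI0def, ← mul_div_assoc]
          exact div_le_div_of_nonneg_right (Ifun_le_exp hd hα _ (by positivity)) hI0.le
        have ht : 0 < Real.sqrt 2 / 2 * (M * r) := by positivity
        have h2 : Real.exp (-(Real.sqrt 2 / 2 * (M * r))) ≤
            4 / (Real.sqrt 2 / 2 * (M * r)) ^ 2 := exp_neg_le_aux _ ht
        have h3 : (Real.sqrt 2 / 2 * (M * r)) ^ 2 = M ^ 2 * r ^ 2 / 2 := by
          rw [mul_pow, div_pow, Real.sq_sqrt (by norm_num : (0:ℝ) ≤ 2)]; ring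
        have h4 : 4 / (Real.sqrt 2 / 2 * (M * r)) ^ 2 = 8 / (M ^ 2 * r ^ 2) := by
          rw [h3]; rw [div_div_eq_mul_div]; ring_nf
        calc Psi d α (M * r) ≤ Real.exp (-(Real.sqrt 2 / 2 * (M * r))) * D := h1
          _ ≤ 8 / (M ^ 2 * r ^ 2) * D := by
              apply mul_le_mul_of_nonneg_right _ hD0
              rw [← h4]; exact h2
          _ = 8 * D / (M ^ 2 * r ^ 2) := by ring
      have hu2 : |u y| ^ 2 ≤ (a + K) ^ 2 * r ^ 2 := by
        have har : a ≤ a * r := le_mul_of_one_le_right ha0 hy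
        have h1 : |u y| ≤ (a + K) * r := by nlinarith
        calc |u y| ^ 2 ≤ ((a + K) * r) ^ 2 := pow_le_pow_left₀ (abs_nonneg _) h1 2
          _ = (a + K) ^ 2 * r ^ 2 := by ring
      have hPnn : 0 ≤ 8 * D / (M ^ 2 * r ^ 2) :=
        div_nonneg (by linarith) (by positivity)
      have step1 : Psi d α (M * r) * min 1 (r ^ (-p)) * |u y| ^ 2 ≤
          8 * D / (M ^ 2 * r ^ 2) * r ^ (-p) * ((a + K) ^ 2 * r ^ 2) :=
        mul_le_mul (mul_le_mul hP (min_le_right _ _) hmn0 hPnn) hu2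
          (pow_nonneg (abs_nonneg _) 2)
          (mul_nonneg hPnn (Real.rpow_nonneg hr0 _))
      have step2 : 8 * D / (M ^ 2 * r ^ 2) * r ^ (-p) * ((a + K) ^ 2 * r ^ 2) =
          C2 * r ^ (-p) := by
        rw [hC2def]; field_simp
      have hkey : r ^ (-p) ≤ 2 ^ p * (1 + r) ^ (-p) := by
        rw [Real.rpow_neg hr0, Real.rpow_neg (by positivity),
          show (2:ℝ) ^ p * ((1 + r) ^ p)⁻¹ = 2 ^ p / (1 + r) ^ p by rw [div_eq_mul_inv],
          inv_eq_one_div, div_le_div_iff₀ (by positivity) (by positivity)]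
        have h5 : (1 + r) ^ p ≤ (2 * r) ^ p :=
          Real.rpow_le_rpow (by positivity) (by linarith) hp0.le
        rw [Real.mul_rpow (by norm_num) hr0] at h5
        linarith
      calc Psi d α (M * r) * min 1 (r ^ (-p)) * |u y| ^ 2
          ≤ C2 * r ^ (-p) := by rw [← step2]; exact step1
        _ ≤ max C1 C2 * (2 ^ p * (1 + r) ^ (-p)) :=
            mul_le_mul (le_max_right _ _) hkey (Real.rpow_nonneg hr0 _) hmaxnn
        _ = C * (1 + r) ^ (-p) := by rw [hCdef]; ring
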